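/- arXiv:1510.04193 — 2 statements merged into one kernel-verified Lean document; each statement's English description precedes it below -/
import Mathlib

section
/- Let (X,d) be a metric space with a fully supported, locally finite, tight Borel measure μ, and assume (X,d,μ) is amenable: there are functions εₙ : X → (0,∞) such that for each x the sequence (εₙ(x)) is strictly decreasing to 0 with 0 < μ(B(x,εₙ(x))) < ∞, for every measurable E and every x one has limsup_{n} μ(E ∩ B(x,εₙ(x)))/μ(B(x,εₙ(x))) = limsup_{ε→0⁺} μ(E ∩ B(x,ε))/μ(B(x,ε)), and for each n the map x ↦ B(x,εₙ(x)) is continuous into the measure algebra, i.e. for every x and η > 0 there is δ > 0 such that d(x,x') < δ implies μ(B(x,εₙ(x)) △ B(x',εₙ(x'))) < η. If A ⊆ X is measurable and solid (D_A(x) exists for every x), then the function D_A : X → [0,1] is of Baire class 1: the preimage of every open subset of [0,1] is a countable union of closed subsets of X (an Fσ set). -/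
open MeasureTheory Metric Set Filter Topology
open scoped symmDiff ENNReal

-- aux: measure of intersection perturbed by symmetric difference
lemma aux_inter_le {X : Type*} [MeasurableSpace X] (μ : Measure X) (S B B' : Set X) :
    μ (S ∩ B) ≤ μ (S ∩ B') + μ (B ∆ B') := by
  refine le_trans (measure_mono ?_) (measure_union_le _ _)
  intro y ⟨hyS, hyB⟩
  by_cases h : y ∈ B'
  · exact Or.inl ⟨hyS, h⟩
  · exact Or.inr (Or.inl ⟨hyB, h⟩)

lemma aux_abs_le {a b c : ℝ≥0∞} (ha : a ≠ ⊤) (hb : b ≠ ⊤) (hc : c ≠ ⊤)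
    (h1 : a ≤ b + c) (h2 : b ≤ a + c) : |a.toReal - b.toReal| ≤ c.toReal := by
  rw [abs_sub_le_iff]
  constructor
  · have := ENNReal.toReal_mono (by finiteness) h1
    rw [ENNReal.toReal_add hb hc] at this
    linarith
  · have := ENNReal.toReal_mono (by finiteness) h2
    rw [ENNReal.toReal_add ha hc] at this
    linarith

-- Fσ lemma: pointwise limit of continuous functions
lemma aux_fsigma {X : Type*} [MetricSpace X] (f : ℕ → X → ℝ) (hf : ∀ n, Continuous (f n))
    (D : X → ℝ) (hlim : ∀ x, Tendsto (fun n => f n x) atTop (𝓝 (D x))) :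
    ∀ U : Set ℝ, IsOpen U →
      ∃ F : ℕ → Set X, (∀ n, IsClosed (F n)) ∧ D ⁻¹' U = ⋃ n, F n := by
  intro U hU
  set C : ℕ → Set ℝ := fun m => {y | ∀ z ∉ U, 1 / (m + 1 : ℝ) ≤ dist y z} with hC
  have hCclosed : ∀ m, IsClosed (C m) := by
    intro m
    have : C m = ⋂ z ∈ Uᶜ, {y | 1 / (m + 1 : ℝ) ≤ dist y z} := by
      ext y; simp [hC]
    rw [this]
    exact isClosed_biInter fun z _ =>
      isClosed_le continuous_const (Continuous.dist continuous_id continuous_const)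
  have hCU : ∀ m, C m ⊆ U := by
    intro m y hy
    by_contra hyU
    have := hy y hyU
    simp at this
    have : (0:ℝ) < 1 / (m+1:ℝ) := by positivity
    linarith [hy y hyU, dist_self y]
  set G : ℕ → ℕ → Set X := fun m N => ⋂ n, ⋂ (_ : N ≤ n), (f n) ⁻¹' (C m) with hG
  have hGclosed : ∀ m N, IsClosed (G m N) := fun m N =>
    isClosed_iInter fun n => isClosed_iInter fun _ => (hCclosed m).preimage (hf n)
  refine ⟨fun k => G (Nat.unpair k).1 (Nat.unpair k).2, fun k => hGclosed _ _, ?_⟩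
  have hUnion : (⋃ k, G (Nat.unpair k).1 (Nat.unpair k).2) = ⋃ m, ⋃ N, G m N := by
    ext x
    simp only [Set.mem_iUnion]
    constructor
    · rintro ⟨k, hk⟩; exact ⟨_, _, hk⟩
    · rintro ⟨m, N, h⟩; exact ⟨Nat.pair m N, by simpa [Nat.unpair_pair] using h⟩
  rw [hUnion]
  ext x
  simp only [Set.mem_preimage, Set.mem_iUnion]
  constructor
  · intro hx
    obtain ⟨r, hr, hball⟩ := Metric.isOpen_iff.1 hU (D x) hx
    obtain ⟨m, hm⟩ := exists_nat_one_div_lt (show (0:ℝ) < r / 2 by linarith)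
    obtain ⟨N, hN⟩ := Metric.tendsto_atTop.1 (hlim x) _ (show (0:ℝ) < 1 / (m + 1 : ℝ) by positivity)
    refine ⟨m, N, ?_⟩
    simp only [hG, Set.mem_iInter, Set.mem_preimage]
    intro n hn z hz
    have h1 : r ≤ dist (D x) z := by
      by_contra h
      exact hz (hball (by simpa [Metric.mem_ball, dist_comm] using not_le.1 h))
    have h2 : dist (f n x) (D x) < 1 / (m + 1 : ℝ) := hN n hn
    have h3 : dist (D x) z ≤ dist (D x) (f n x) + dist (f n x) z := dist_triangle _ _ _
    rw [dist_comm (D x) (f n x)] at h3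
    have hm' : 1 / (m + 1 : ℝ) < r / 2 := hm
    linarith
  · rintro ⟨m, N, hx⟩
    simp only [hG, Set.mem_iInter, Set.mem_preimage] at hx
    have : D x ∈ C m := by
      refine (hCclosed m).mem_of_tendsto (hlim x) ?_
      filter_upwards [eventually_ge_atTop N] with n hn using hx n hn
    exact hCU m this

/-- The density of a set `A` at a point `x`: the limit, as `ε → 0⁺`, of
`μ(A ∩ B(x,ε))/μ(B(x,ε))`. -/
def HasDensity {X : Type*} [MetricSpace X] [MeasurableSpace X]
    (μ : Measure X) (A : Set X) (x : X) (v : ℝ) : Prop :=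
  Tendsto (fun e : ℝ => (μ (A ∩ ball x e)).toReal / (μ (ball x e)).toReal)
    (𝓝[>] (0 : ℝ)) (𝓝 v)

/-- **In an amenable space the density function of a solid set is of Baire class 1.**
Let `μ` be a fully supported, locally finite, tight Borel measure on a metric space `X`,
and assume `(X,d,μ)` is amenable, as witnessed by functions `εₙ : X → (0,∞)`. If `A` is
measurable and solid, with density function `D`, then the preimage under `D` of every open
set is `Fσ`. -/
theorem stmt_18 {X : Type*} [MetricSpace X] [MeasurableSpace X] [BorelSpace X]
    (μ : Measure X) [IsLocallyFiniteMeasure μ]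
    (hfs : ∀ U : Set X, IsOpen U → U.Nonempty → 0 < μ U)
    (htight : ∀ E : Set X, MeasurableSet E → ∀ r : ℝ≥0∞, r < μ E →
      ∃ K : Set X, IsCompact K ∧ K ⊆ E ∧ r < μ K)
    -- amenability data
    (ε : ℕ → X → ℝ)
    (hεpos : ∀ n x, 0 < ε n x)
    (hεanti : ∀ x, StrictAnti fun n => ε n x)
    (hεlim : ∀ x, Tendsto (fun n => ε n x) atTop (𝓝 0))
    (hballpos : ∀ n x, 0 < μ (ball x (ε n x)))
    (hballfin : ∀ n x, μ (ball x (ε n x)) < ⊤)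
    (hstrong : ∀ E : Set X, MeasurableSet E → ∀ x : X,
      limsup (fun n =>
          (μ (E ∩ ball x (ε n x))).toReal / (μ (ball x (ε n x))).toReal) atTop =
      limsup (fun e : ℝ => (μ (E ∩ ball x e)).toReal / (μ (ball x e)).toReal)
        (𝓝[>] (0 : ℝ)))
    (hcontball : ∀ (n : ℕ) (x : X), ∀ η : ℝ, 0 < η → ∃ δ > (0 : ℝ), ∀ x' : X,
      dist x x' < δ → μ (ball x (ε n x) ∆ ball x' (ε n x')) < ENNReal.ofReal η)
    -- a solid measurable set with density function `D`
    (A : Set X) (hA : MeasurableSet A)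
    (D : X → ℝ) (hD : ∀ x : X, HasDensity μ A x (D x)) :
    ∀ U : Set ℝ, IsOpen U →
      ∃ F : ℕ → Set X, (∀ n, IsClosed (F n)) ∧ D ⁻¹' U = ⋃ n, F n := by
  -- the approximating functions
  set f : ℕ → X → ℝ :=
    fun n x => (μ (A ∩ ball x (ε n x))).toReal / (μ (ball x (ε n x))).toReal with hf
  -- continuity of x ↦ μ(E ∩ B(x, εₙ x)).toReal
  have hcontE : ∀ (E : Set X) (n : ℕ),
      Continuous fun x => (μ (E ∩ ball x (ε n x))).toReal := by
    intro E n
    rw [Metric.continuous_iff]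
    intro b η hη
    obtain ⟨δ, hδ, hδ'⟩ := hcontball n b η hη
    refine ⟨δ, hδ, fun a ha => ?_⟩
    have hsd : μ (ball b (ε n b) ∆ ball a (ε n a)) < ENNReal.ofReal η :=
      hδ' a (by rwa [dist_comm] at ha)
    have hfin1 : μ (E ∩ ball a (ε n a)) ≠ ⊤ :=
      (lt_of_le_of_lt (measure_mono inter_subset_right) (hballfin n a)).ne
    have hfin2 : μ (E ∩ ball b (ε n b)) ≠ ⊤ :=
      (lt_of_le_of_lt (measure_mono inter_subset_right) (hballfin n b)).ne
    have hfin3 : μ (ball b (ε n b) ∆ ball a (ε n a)) ≠ ⊤ :=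
      (lt_trans hsd ENNReal.ofReal_lt_top).ne
    rw [Real.dist_eq]
    calc |(μ (E ∩ ball a (ε n a))).toReal - (μ (E ∩ ball b (ε n b))).toReal|
        ≤ (μ (ball b (ε n b) ∆ ball a (ε n a))).toReal := by
          refine aux_abs_le hfin1 hfin2 hfin3 ?_ ?_
          · have := aux_inter_le μ E (ball a (ε n a)) (ball b (ε n b))
            rwa [symmDiff_comm] at this
          · exact aux_inter_le μ E (ball b (ε n b)) (ball a (ε n a))
      _ < η := ENNReal.toReal_lt_of_lt_ofReal hsd
  have hdenom_pos : ∀ n x, (0:ℝ) < (μ (ball x (ε n x))).toReal :=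
    fun n x => ENNReal.toReal_pos (hballpos n x).ne' (hballfin n x).ne
  have hcontf : ∀ n, Continuous (f n) := by
    intro n
    have hden : Continuous fun x => (μ (ball x (ε n x))).toReal := by
      have := hcontE univ n
      simpa [Set.univ_inter] using this
    exact Continuous.div (hcontE A n) hden fun x => (hdenom_pos n x).ne'
  -- bounds on f
  have hf01 : ∀ n x, f n x ∈ Set.Icc (0:ℝ) 1 := by
    intro n x
    constructor
    · exact div_nonneg ENNReal.toReal_nonneg ENNReal.toReal_nonneg
    · rw [div_le_one (hdenom_pos n x)]
      exact ENNReal.toReal_mono (hballfin n x).ne (measure_mono inter_subset_right)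
  -- pointwise convergence f n x → D x
  have hptwise : ∀ x, Tendsto (fun n => f n x) atTop (𝓝 (D x)) := by
    intro x
    have hbdd_above : atTop.IsBoundedUnder (· ≤ ·) fun n => f n x :=
      isBoundedUnder_of ⟨1, fun n => (hf01 n x).2⟩
    have hbdd_below : atTop.IsBoundedUnder (· ≥ ·) fun n => f n x :=
      isBoundedUnder_of ⟨0, fun n => (hf01 n x).1⟩
    -- limsup = D x
    have hsup : limsup (fun n => f n x) atTop = D x := by
      rw [hstrong A hA x]
      exact (hD x).limsup_eq
    -- eventual finiteness and positivity of small balls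
    have hev : ∀ᶠ e in 𝓝[>] (0:ℝ), 0 < μ (ball x e) ∧ μ (ball x e) < ⊤ := by
      obtain ⟨s, hs, hsfin⟩ := μ.finiteAt_nhds x
      obtain ⟨r, hr, hrs⟩ := Metric.mem_nhds_iff.1 hs
      filter_upwards [Ioo_mem_nhdsGT_of_mem (Set.left_mem_Ico.2 hr)] with e he
      exact ⟨hfs _ isOpen_ball (nonempty_ball.2 he.1),
        lt_of_le_of_lt (measure_mono fun y hy => hrs (lt_of_lt_of_le (mem_ball.1 hy) he.2.le)) hsfin⟩
    -- the complement's ratio tends to 1 - D x along the small-radius filter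
    have hcompl_tendsto :
        Tendsto (fun e : ℝ => (μ (Aᶜ ∩ ball x e)).toReal / (μ (ball x e)).toReal)
          (𝓝[>] (0:ℝ)) (𝓝 (1 - D x)) := by
      have key : ∀ e : ℝ, 0 < μ (ball x e) → μ (ball x e) < ⊤ →
          (μ (Aᶜ ∩ ball x e)).toReal / (μ (ball x e)).toReal =
            1 - (μ (A ∩ ball x e)).toReal / (μ (ball x e)).toReal := by
        intro e hpos hfin
        have h1 : μ (ball x e ∩ A) + μ (ball x e \ A) = μ (ball x e) :=
          measure_inter_add_diff _ hA
        have hAB : Aᶜ ∩ ball x e = ball x e \ A := by ext y; simp [Set.mem_diff, and_comm]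
        have hAB2 : A ∩ ball x e = ball x e ∩ A := Set.inter_comm _ _
        have hf1 : μ (ball x e ∩ A) ≠ ⊤ :=
          (lt_of_le_of_lt (measure_mono inter_subset_left) hfin).ne
        have hf2 : μ (ball x e \ A) ≠ ⊤ :=
          (lt_of_le_of_lt (measure_mono diff_subset) hfin).ne
        have htr : (μ (ball x e ∩ A)).toReal + (μ (ball x e \ A)).toReal
            = (μ (ball x e)).toReal := by
          rw [← ENNReal.toReal_add hf1 hf2, h1]
        have hdpos : (0:ℝ) < (μ (ball x e)).toReal := ENNReal.toReal_pos hpos.ne' hfin.ne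
        rw [hAB, hAB2]
        field_simp
        linarith
      refine Tendsto.congr' ?_ (tendsto_const_nhds.sub (hD x))
      filter_upwards [hev] with e he
      exact (key e he.1 he.2).symm
    -- liminf = D x
    have hinf : liminf (fun n => f n x) atTop = D x := by
      have hcompl_sup :
          limsup (fun n => (μ (Aᶜ ∩ ball x (ε n x))).toReal /
            (μ (ball x (ε n x))).toReal) atTop = 1 - D x := by
        rw [hstrong Aᶜ hA.compl x]
        exact hcompl_tendsto.limsup_eq
      have heq : ∀ n, (μ (Aᶜ ∩ ball x (ε n x))).toReal / (μ (ball x (ε n x))).toReal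
          = 1 - f n x := by
        intro n
        have h1 : μ (ball x (ε n x) ∩ A) + μ (ball x (ε n x) \ A) = μ (ball x (ε n x)) :=
          measure_inter_add_diff _ hA
        have hAB : Aᶜ ∩ ball x (ε n x) = ball x (ε n x) \ A := by
          ext y; simp [Set.mem_diff, and_comm]
        have hf1 : μ (ball x (ε n x) ∩ A) ≠ ⊤ :=
          (lt_of_le_of_lt (measure_mono inter_subset_left) (hballfin n x)).ne
        have hf2 : μ (ball x (ε n x) \ A) ≠ ⊤ :=
          (lt_of_le_of_lt (measure_mono diff_subset) (hballfin n x)).ne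
        have htr : (μ (ball x (ε n x) ∩ A)).toReal + (μ (ball x (ε n x) \ A)).toReal
            = (μ (ball x (ε n x))).toReal := by
          rw [← ENNReal.toReal_add hf1 hf2, h1]
        have hdpos := hdenom_pos n x
        rw [hAB, hf]
        simp only
        rw [Set.inter_comm A]
        field_simp
        linarith
      have hls : limsup (fun n => 1 - f n x) atTop = 1 - D x := by
        rw [← hcompl_sup]
        exact limsup_congr (Eventually.of_forall fun n => (heq n).symm)
      have := limsup_const_sub atTop (fun n => f n x) 1
        hbdd_above.isCoboundedUnder_ge hbdd_below
      rw [hls] at this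
      linarith [this]
    exact tendsto_of_liminf_eq_limsup hinf hsup hbdd_above hbdd_below
  exact aux_fsigma f hcontf D hptwise
end

section
/- Let (X,d) be a metric space with a fully supported, locally finite, tight Borel measure μ, and assume (X,d,μ) is amenable: there are functions εₙ : X → (0,∞) such that for each x the sequence (εₙ(x)) is strictly decreasing to 0 with 0 < μ(B(x,εₙ(x))) < ∞, for every measurable E and every x one has limsup_{n} μ(E ∩ B(x,εₙ(x)))/μ(B(x,εₙ(x))) = limsup_{ε→0⁺} μ(E ∩ B(x,ε))/μ(B(x,ε)), and for each n the map x ↦ B(x,εₙ(x)) is continuous into the measure algebra, i.e. for every x and η > 0 there is δ > 0 such that d(x,x') < δ implies μ(B(x,εₙ(x)) △ B(x',εₙ(x'))) < η. Suppose A ⊆ X is measurable and solid (D_A(x) exists for every x). Then: (a) Φ(A) and Φ(X∖A) are Gδ subsets of X; (b) Sharp(A) is an Fσ subset of X; (c) if there is r < 1 such that D_A(x) ∈ [0,r] ∪ {1} for every x, then Φ(A) is both Fσ and Gδ. -/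
open MeasureTheory Metric Set Filter Topology
open scoped symmDiff ENNReal

/-- `Φ(A)`: the set of points where `A` has density `1`. -/
def PhiSet {X : Type*} [MetricSpace X] [MeasurableSpace X]
    (μ : Measure X) (A : Set X) : Set X :=
  {x | HasDensity μ A x 1}

/-- `Sharp(A)`: the set of points where the density of `A` exists and lies strictly
between `0` and `1`. -/
def SharpSet {X : Type*} [MetricSpace X] [MeasurableSpace X]
    (μ : Measure X) (A : Set X) : Set X :=
  {x | ∃ v : ℝ, 0 < v ∧ v < 1 ∧ HasDensity μ A x v}

/-- A set is `Fσ` iff it is a countable union of closed sets. -/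
def IsFsigma {Y : Type*} [TopologicalSpace Y] (S : Set Y) : Prop :=
  ∃ F : ℕ → Set Y, (∀ n, IsClosed (F n)) ∧ S = ⋃ n, F n

lemma fsig_union {Y : Type*} [TopologicalSpace Y] {S T : Set Y}
    (hS : IsFsigma S) (hT : IsFsigma T) : IsFsigma (S ∪ T) := by
  obtain ⟨F, hF, rfl⟩ := hS; obtain ⟨G, hG, rfl⟩ := hT
  exact ⟨fun n => F n ∪ G n, fun n => (hF n).union (hG n), (iUnion_union_distrib F G).symm⟩

lemma fsig_inter {Y : Type*} [TopologicalSpace Y] {S T : Set Y}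
    (hS : IsFsigma S) (hT : IsFsigma T) : IsFsigma (S ∩ T) := by
  obtain ⟨F, hF, rfl⟩ := hS; obtain ⟨G, hG, rfl⟩ := hT
  refine ⟨fun m => F m.unpair.1 ∩ G m.unpair.2,
    fun m => (hF _).inter (hG _), ?_⟩
  ext x
  simp only [mem_inter_iff, mem_iUnion]
  constructor
  · rintro ⟨⟨i, hi⟩, ⟨j, hj⟩⟩
    exact ⟨Nat.pair i j, by simp [Nat.unpair_pair, hi, hj]⟩
  · rintro ⟨m, hm1, hm2⟩
    exact ⟨⟨_, hm1⟩, ⟨_, hm2⟩⟩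

lemma fsig_compl_gdelta {Y : Type*} [TopologicalSpace Y] {S : Set Y}
    (hS : IsFsigma S) : IsGδ Sᶜ := by
  obtain ⟨F, hF, rfl⟩ := hS
  rw [compl_iUnion]
  exact IsGδ.iInter fun n => (hF n).isOpen_compl.isGδ

lemma baire1_gt {Y : Type*} [TopologicalSpace Y] (f : ℕ → Y → ℝ)
    (hf : ∀ n, Continuous (f n)) (g : Y → ℝ)
    (hg : ∀ x, Tendsto (fun n => f n x) atTop (𝓝 (g x))) (a : ℝ) :
    IsFsigma {x | a < g x} := by
  refine ⟨fun m => ⋂ n, ⋂ (_ : m.unpair.2 ≤ n), {x | a + 1/(m.unpair.1 + 1 : ℝ) ≤ f n x},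
    fun m => isClosed_iInter fun n => isClosed_iInter fun _ =>
      isClosed_le continuous_const (hf n), ?_⟩
  ext x
  simp only [mem_setOf_eq, mem_iUnion, mem_iInter]
  constructor
  · intro hx
    obtain ⟨k, hk⟩ := exists_nat_one_div_lt (sub_pos.2 hx)
    have hk' : a + 1/(k+1 : ℝ) < g x := by linarith
    have := (hg x).eventually (eventually_ge_nhds hk')
    obtain ⟨N, hN⟩ := this.exists_forall_of_atTop
    exact ⟨Nat.pair k N, by simpa [Nat.unpair_pair] using hN⟩
  · rintro ⟨m, hm⟩
    have h1 : a + 1/(m.unpair.1 + 1 : ℝ) ≤ g x :=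
      ge_of_tendsto (hg x) (eventually_atTop.2 ⟨m.unpair.2, hm⟩)
    have h2 : (0:ℝ) < 1/(m.unpair.1 + 1 : ℝ) := by positivity
    linarith

lemma baire1_lt {Y : Type*} [TopologicalSpace Y] (f : ℕ → Y → ℝ)
    (hf : ∀ n, Continuous (f n)) (g : Y → ℝ)
    (hg : ∀ x, Tendsto (fun n => f n x) atTop (𝓝 (g x))) (a : ℝ) :
    IsFsigma {x | g x < a} := by
  have := baire1_gt (fun n x => -(f n x)) (fun n => (hf n).neg) (fun x => -(g x))
    (fun x => (hg x).neg) (-a)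
  convert this using 2 with x
  simp [neg_lt_neg_iff, lt_neg]

lemma abs_toReal_sub_le {X : Type*} [MeasurableSpace X] (μ : Measure X)
    {S T : Set X} (hS : μ S < ⊤) (hT : μ T < ⊤) :
    |(μ S).toReal - (μ T).toReal| ≤ (μ (S ∆ T)).toReal := by
  have hd : μ (S ∆ T) < ⊤ := by
    refine lt_of_le_of_lt (measure_mono ?_) (lt_of_le_of_lt (measure_union_le S T) ?_)
    · rw [Set.symmDiff_def]
      exact union_subset (diff_subset.trans subset_union_left)
        (diff_subset.trans subset_union_right)
    · exact ENNReal.add_lt_top.2 ⟨hS, hT⟩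
  have h1 : μ S ≤ μ T + μ (S ∆ T) := by
    refine le_trans (measure_mono ?_) (measure_union_le _ _)
    intro x hx
    by_cases h : x ∈ T
    · exact Or.inl h
    · exact Or.inr (Or.inl ⟨hx, h⟩)
  have h2 : μ T ≤ μ S + μ (S ∆ T) := by
    refine le_trans (measure_mono ?_) (measure_union_le _ _)
    intro x hx
    by_cases h : x ∈ S
    · exact Or.inl h
    · exact Or.inr (Or.inr ⟨hx, h⟩)
  rw [abs_sub_le_iff]
  constructor
  · have := ENNReal.toReal_mono (by finiteness) h1
    rw [ENNReal.toReal_add hT.ne hd.ne] at this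
    linarith
  · have := ENNReal.toReal_mono (by finiteness) h2
    rw [ENNReal.toReal_add hS.ne hd.ne] at this
    linarith

lemma compl_ratio {X : Type*} [MeasurableSpace X] (μ : Measure X)
    {A : Set X} (hA : MeasurableSet A) {B : Set X}
    (h0 : μ B ≠ 0) (ht : μ B ≠ ⊤) :
    (μ (Aᶜ ∩ B)).toReal / (μ B).toReal = 1 - (μ (A ∩ B)).toReal / (μ B).toReal := by
  have key : μ (B ∩ A) + μ (B \ A) = μ B := measure_inter_add_diff B hA
  have h1 : μ (B ∩ A) ≠ ⊤ := (lt_of_le_of_lt (measure_mono inter_subset_left) ht.lt_top).ne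
  have h2 : μ (B \ A) ≠ ⊤ := (lt_of_le_of_lt (measure_mono diff_subset) ht.lt_top).ne
  have := congrArg ENNReal.toReal key
  rw [ENNReal.toReal_add h1 h2] at this
  have hAcB : Aᶜ ∩ B = B \ A := by rw [Set.diff_eq, inter_comm]
  have hAB : A ∩ B = B ∩ A := inter_comm _ _
  have hne : (μ B).toReal ≠ 0 := by
    have := ENNReal.toReal_pos h0 ht
    linarith
  rw [hAcB, hAB]
  field_simp
  linarith

/-- **Complexity of `Φ(A)` and `Sharp(A)` for a solid set in an amenable space.**
Let `μ` be a fully supported, locally finite, tight Borel measure on a metric space `X`,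
amenable as witnessed by `εₙ : X → (0,∞)`, and let `A` be measurable and solid. Then
(a) `Φ(A)` and `Φ(X∖A)` are `Gδ`; (b) `Sharp(A)` is `Fσ`; (c) if there is `r < 1` with
`D_A(x) ∈ [0,r] ∪ {1}` for every `x`, then `Φ(A)` is both `Fσ` and `Gδ`. -/
theorem stmt_19 {X : Type*} [MetricSpace X] [MeasurableSpace X] [BorelSpace X]
    (μ : Measure X) [IsLocallyFiniteMeasure μ]
    (hfs : ∀ U : Set X, IsOpen U → U.Nonempty → 0 < μ U)
    (htight : ∀ E : Set X, MeasurableSet E → ∀ r : ℝ≥0∞, r < μ E →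
      ∃ K : Set X, IsCompact K ∧ K ⊆ E ∧ r < μ K)
    -- amenability data
    (ε : ℕ → X → ℝ)
    (hεpos : ∀ n x, 0 < ε n x)
    (hεanti : ∀ x, StrictAnti fun n => ε n x)
    (hεlim : ∀ x, Tendsto (fun n => ε n x) atTop (𝓝 0))
    (hballpos : ∀ n x, 0 < μ (ball x (ε n x)))
    (hballfin : ∀ n x, μ (ball x (ε n x)) < ⊤)
    (hstrong : ∀ E : Set X, MeasurableSet E → ∀ x : X,
      limsup (fun n =>
          (μ (E ∩ ball x (ε n x))).toReal / (μ (ball x (ε n x))).toReal) atTop =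
      limsup (fun e : ℝ => (μ (E ∩ ball x e)).toReal / (μ (ball x e)).toReal)
        (𝓝[>] (0 : ℝ)))
    (hcontball : ∀ (n : ℕ) (x : X), ∀ η : ℝ, 0 < η → ∃ δ > (0 : ℝ), ∀ x' : X,
      dist x x' < δ → μ (ball x (ε n x) ∆ ball x' (ε n x')) < ENNReal.ofReal η)
    -- a solid measurable set
    (A : Set X) (hA : MeasurableSet A)
    (hsolid : ∀ x : X, ∃ v : ℝ, HasDensity μ A x v) :
    IsGδ (PhiSet μ A) ∧ IsGδ (PhiSet μ Aᶜ) ∧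
    IsFsigma (SharpSet μ A) ∧
    (∀ r : ℝ, r < 1 → (∀ (x : X) (v : ℝ), HasDensity μ A x v → v ≤ r ∨ v = 1) →
      IsFsigma (PhiSet μ A) ∧ IsGδ (PhiSet μ A)) := by
  classical
  -- the density function
  choose D hD using hsolid
  set f : ℕ → X → ℝ := fun n x =>
    (μ (A ∩ ball x (ε n x))).toReal / (μ (ball x (ε n x))).toReal with hf_def
  -- bounds on f
  have hden_pos : ∀ n x, (0:ℝ) < (μ (ball x (ε n x))).toReal :=
    fun n x => ENNReal.toReal_pos (hballpos n x).ne' (hballfin n x).ne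
  have hf01 : ∀ n x, 0 ≤ f n x ∧ f n x ≤ 1 := by
    intro n x
    constructor
    · exact div_nonneg ENNReal.toReal_nonneg ENNReal.toReal_nonneg
    · rw [div_le_one (hden_pos n x)]
      exact ENNReal.toReal_mono (hballfin n x).ne (measure_mono inter_subset_right)
  -- continuity of each f n
  have hcont : ∀ n, Continuous (f n) := by
    intro n
    rw [continuous_iff_continuousAt]
    intro x
    have hnum : ContinuousAt (fun y => (μ (A ∩ ball y (ε n y))).toReal) x := by
      rw [Metric.continuousAt_iff]
      intro η hη
      obtain ⟨δ, hδ, hδ'⟩ := hcontball n x η hη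
      refine ⟨δ, hδ, fun {y} hy => ?_⟩
      rw [Real.dist_eq]
      have hsub : (A ∩ ball y (ε n y)) ∆ (A ∩ ball x (ε n x)) ⊆
          ball x (ε n x) ∆ ball y (ε n y) := by
        rw [symmDiff_comm]
        rintro z hz
        rcases hz with ⟨⟨hz1, hz2⟩, hz3⟩ | ⟨⟨hz1, hz2⟩, hz3⟩
        · exact Or.inl ⟨hz2, fun h => hz3 ⟨hz1, h⟩⟩
        · exact Or.inr ⟨hz2, fun h => hz3 ⟨hz1, h⟩⟩
      have hfin1 : μ (A ∩ ball y (ε n y)) < ⊤ :=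
        lt_of_le_of_lt (measure_mono inter_subset_right) (hballfin n y)
      have hfin2 : μ (A ∩ ball x (ε n x)) < ⊤ :=
        lt_of_le_of_lt (measure_mono inter_subset_right) (hballfin n x)
      calc |(μ (A ∩ ball y (ε n y))).toReal - (μ (A ∩ ball x (ε n x))).toReal|
          ≤ (μ ((A ∩ ball y (ε n y)) ∆ (A ∩ ball x (ε n x)))).toReal :=
            abs_toReal_sub_le μ hfin1 hfin2
        _ ≤ (μ (ball x (ε n x) ∆ ball y (ε n y))).toReal := by
            exact ENNReal.toReal_mono
              (ne_top_of_lt (hδ' y (by rwa [dist_comm] at hy))) (measure_mono hsub)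
        _ < η := ENNReal.toReal_lt_of_lt_ofReal (hδ' y (by rwa [dist_comm] at hy))
    have hden : ContinuousAt (fun y => (μ (ball y (ε n y))).toReal) x := by
      rw [Metric.continuousAt_iff]
      intro η hη
      obtain ⟨δ, hδ, hδ'⟩ := hcontball n x η hη
      refine ⟨δ, hδ, fun {y} hy => ?_⟩
      rw [Real.dist_eq]
      calc |(μ (ball y (ε n y))).toReal - (μ (ball x (ε n x))).toReal|
          ≤ (μ (ball y (ε n y) ∆ ball x (ε n x))).toReal :=
            abs_toReal_sub_le μ (hballfin n y) (hballfin n x)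
        _ = (μ (ball x (ε n x) ∆ ball y (ε n y))).toReal := by rw [symmDiff_comm]
        _ < η := ENNReal.toReal_lt_of_lt_ofReal (hδ' y (by rwa [dist_comm] at hy))
    exact hnum.div hden (hden_pos n x).ne'
  -- density of the complement
  have hDc : ∀ x, HasDensity μ Aᶜ x (1 - D x) := by
    intro x
    obtain ⟨s, hs, hsfin⟩ := μ.finiteAt_nhds x
    obtain ⟨e0, he0, hball⟩ := Metric.mem_nhds_iff.1 hs
    have hEq : ∀ᶠ e in 𝓝[>] (0:ℝ),
        1 - (μ (A ∩ ball x e)).toReal / (μ (ball x e)).toReal =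
        (μ (Aᶜ ∩ ball x e)).toReal / (μ (ball x e)).toReal := by
      filter_upwards [Ioo_mem_nhdsGT_of_mem (Set.left_mem_Ico.2 he0)] with e he
      have hbf : μ (ball x e) ≠ ⊤ :=
        (lt_of_le_of_lt (measure_mono ((ball_subset_ball he.2.le).trans hball)) hsfin).ne
      have hbp : μ (ball x e) ≠ 0 :=
        (hfs _ isOpen_ball ⟨x, mem_ball_self he.1⟩).ne'
      exact (compl_ratio μ hA hbp hbf).symm
    exact (tendsto_const_nhds.sub (hD x)).congr' hEq
  -- pointwise convergence of f to D
  have hfD : ∀ x, Tendsto (fun n => f n x) atTop (𝓝 (D x)) := by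
    intro x
    have hbdd_above : IsBoundedUnder (· ≤ ·) atTop (fun n => f n x) :=
      isBoundedUnder_of ⟨1, fun n => (hf01 n x).2⟩
    have hbdd_below : IsBoundedUnder (· ≥ ·) atTop (fun n => f n x) :=
      isBoundedUnder_of ⟨0, fun n => (hf01 n x).1⟩
    have h1 : limsup (fun n => f n x) atTop = D x := by
      rw [hf_def, hstrong A hA x]
      exact (hD x).limsup_eq
    have h3 : ∀ n, (μ (Aᶜ ∩ ball x (ε n x))).toReal / (μ (ball x (ε n x))).toReal
        = 1 - f n x := fun n =>
      compl_ratio μ hA (hballpos n x).ne' (hballfin n x).ne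
    have h2 : limsup (fun n => 1 - f n x) atTop = 1 - D x := by
      rw [show (fun n => 1 - f n x) = fun n =>
        (μ (Aᶜ ∩ ball x (ε n x))).toReal / (μ (ball x (ε n x))).toReal from
        funext fun n => (h3 n).symm]
      rw [hstrong Aᶜ hA.compl x]
      exact (hDc x).limsup_eq
    have h4 : limsup (fun n => 1 - f n x) atTop = 1 - liminf (fun n => f n x) atTop :=
      limsup_const_sub atTop (fun n => f n x) 1 hbdd_above.isCoboundedUnder_ge hbdd_below
    have h5 : liminf (fun n => f n x) atTop = D x := by
      rw [h4] at h2; linarith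
    exact tendsto_of_liminf_eq_limsup h5 h1 hbdd_above hbdd_below
  -- identification of the sets
  have huniq : ∀ x v, HasDensity μ A x v → v = D x :=
    fun x v hv => tendsto_nhds_unique hv (hD x)
  have hPhiA : PhiSet μ A = {x | D x = 1} := by
    ext x
    constructor
    · exact fun h => (huniq x 1 h).symm
    · intro h
      have h' : D x = 1 := h
      show HasDensity μ A x 1
      rw [← h']; exact hD x
  have hPhiAc : PhiSet μ Aᶜ = {x | D x = 0} := by
    ext x
    constructor
    · intro h
      have := tendsto_nhds_unique (h : HasDensity μ Aᶜ x 1) (hDc x)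
      simp only [mem_setOf_eq]; linarith
    · intro h
      have h' : (1:ℝ) - D x = 1 := by simp only [mem_setOf_eq] at h; linarith
      show HasDensity μ Aᶜ x 1
      rw [← h']; exact hDc x
  have hSharp : SharpSet μ A = {x | 0 < D x} ∩ {x | D x < 1} := by
    ext x
    constructor
    · rintro ⟨v, hv0, hv1, hv⟩
      have := huniq x v hv
      exact ⟨by simp only [mem_setOf_eq]; linarith, by simp only [mem_setOf_eq]; linarith⟩
    · rintro ⟨h0, h1⟩
      exact ⟨D x, h0, h1, hD x⟩
  -- Fσ building blocks
  have hgt : ∀ a : ℝ, IsFsigma {x | a < D x} := baire1_gt f hcont D hfD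
  have hlt : ∀ a : ℝ, IsFsigma {x | D x < a} := baire1_lt f hcont D hfD
  have hGδ_eq : ∀ c : ℝ, IsGδ {x : X | D x = c} := by
    intro c
    have : {x : X | D x = c} = ({x | D x < c} ∪ {x | c < D x})ᶜ := by
      ext x
      simp only [mem_setOf_eq, mem_compl_iff, mem_union, not_or, not_lt]
      constructor
      · intro h; exact ⟨h.ge, h.le⟩
      · intro ⟨h1, h2⟩; exact le_antisymm h2 h1
    rw [this]
    exact fsig_compl_gdelta (fsig_union (hlt c) (hgt c))
  refine ⟨?_, ?_, ?_, ?_⟩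
  · rw [hPhiA]; exact hGδ_eq 1
  · rw [hPhiAc]; exact hGδ_eq 0
  · rw [hSharp]; exact fsig_inter (hgt 0) (hlt 1)
  · intro r hr hgap
    constructor
    · have : PhiSet μ A = {x | r < D x} := by
        rw [hPhiA]
        ext x
        simp only [mem_setOf_eq]
        constructor
        · intro h; rw [h]; exact hr
        · intro h
          rcases hgap x (D x) (hD x) with h' | h'
          · linarith
          · exact h'
      rw [this]; exact hgt r
    · rw [hPhiA]; exact hGδ_eq 1
end
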